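/- Let σ₁ > 0, λ₁, λ₂ ≥ 0, t ≥ 0 and M_τ, P_τ ∈ ℝ with M_τ ≥ 0. For ζ in a neighborhood of 0 (with ζ < σ₁ and (σ₁ − ζ e^{−(σ₁−ζ)t})/(σ₁ − ζ) > 0) define h₂(ζ) = exp( M_τ·log((σ₁ − ζ·e^{−(σ₁−ζ)t})/(σ₁ − ζ)) + 2λ₁·(ζ/(σ₁−ζ))·(t − (1 − e^{−(σ₁−ζ)t})/(σ₁−ζ)) ), and for ξ in a neighborhood of 0 define F₂(ξ) = e^{ξ P_τ}·h₂(λ₂(e^{ξ} − 1)). Then F₂ is twice differentiable at 0 with F₂′(0) = P_τ + λ₂·(2(λ₁/σ₁)t + (M_τ − 2λ₁/σ₁)·(1 − e^{−σ₁ t})/σ₁) and F₂″(0) = (F₂′(0))² + M_τ·(λ₂/σ₁)·(1 − e^{−σ₁ t} + (λ₂/σ₁)[1 − e^{−σ₁ t}(e^{−σ₁ t} + 2 t σ₁)]) + 2(λ₁λ₂/σ₁²)·[t σ₁ − 1 + e^{−σ₁ t} + 2(λ₂/σ₁)(σ₁ t (1 + e^{−σ₁ t}) − 2(1 − e^{−σ₁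 t}))]. -/

import Mathlib

open Real

private lemma aux_pos7 (sig1 t z : ℝ) (hsig1 : 0 < sig1) (ht : 0 ≤ t) (hz : z < sig1) :
    0 < sig1 - z * Real.exp (-(sig1 - z) * t) := by
  have hs : 0 < sig1 - z := by linarith
  have hE0 : 0 < Real.exp (-(sig1 - z) * t) := Real.exp_pos _
  have hE1 : Real.exp (-(sig1 - z) * t) ≤ 1 := by
    rw [show (1:ℝ) = Real.exp 0 by simp]
    exact Real.exp_le_exp.mpr (by nlinarith)
  rcases le_or_gt z 0 with h | h
  · nlinarith
  · nlinarith [mul_le_mul_of_nonneg_left hE1 h.le]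

set_option maxHeartbeats 1000000 in
private lemma aux_deriv7 (sig1 lam1 lam2 t Mtau Ptau : ℝ)
    (hsig1 : 0 < sig1) (ht : 0 ≤ t) (ξ : ℝ)
    (hz : lam2 * (Real.exp ξ - 1) < sig1) :
    HasDerivAt (fun x : ℝ => x * Ptau
      + (Mtau * Real.log ((sig1 - lam2 * (Real.exp x - 1)
            * Real.exp (-(sig1 - lam2 * (Real.exp x - 1)) * t))
          / (sig1 - lam2 * (Real.exp x - 1)))
        + 2 * lam1 * (lam2 * (Real.exp x - 1) / (sig1 - lam2 * (Real.exp x - 1)))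
          * (t - (1 - Real.exp (-(sig1 - lam2 * (Real.exp x - 1)) * t))
            / (sig1 - lam2 * (Real.exp x - 1)))))
      (1 * Ptau + (Mtau * (lam2 * Real.exp ξ / (sig1 - lam2 * (Real.exp ξ - 1))
          - lam2 * Real.exp ξ * Real.exp (-(sig1 - lam2 * (Real.exp ξ - 1)) * t)
              * (1 + lam2 * (Real.exp ξ - 1) * t)
            / (sig1 - lam2 * (Real.exp ξ - 1)
                * Real.exp (-(sig1 - lam2 * (Real.exp ξ - 1)) * t)))
        + (2 * lam1 * (lam2 * Real.exp ξ * sig1 / (sig1 - lam2 * (Real.exp ξ - 1)) ^ 2)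
            * (t - (1 - Real.exp (-(sig1 - lam2 * (Real.exp ξ - 1)) * t))
              / (sig1 - lam2 * (Real.exp ξ - 1)))
          + 2 * lam1 * (lam2 * (Real.exp ξ - 1) / (sig1 - lam2 * (Real.exp ξ - 1)))
            * (lam2 * Real.exp ξ * (Real.exp (-(sig1 - lam2 * (Real.exp ξ - 1)) * t) * t
                  * (sig1 - lam2 * (Real.exp ξ - 1))
                - (1 - Real.exp (-(sig1 - lam2 * (Real.exp ξ - 1)) * t)))
              / (sig1 - lam2 * (Real.exp ξ - 1)) ^ 2)))) ξ := by
  have hs : 0 < sig1 - lam2 * (Real.exp ξ - 1) := by linarith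
  have hs0 : sig1 - lam2 * (Real.exp ξ - 1) ≠ 0 := hs.ne'
  have hN : 0 < sig1 - lam2 * (Real.exp ξ - 1)
      * Real.exp (-(sig1 - lam2 * (Real.exp ξ - 1)) * t) :=
    aux_pos7 sig1 t _ hsig1 ht hz
  have hN0 : sig1 - lam2 * (Real.exp ξ - 1)
      * Real.exp (-(sig1 - lam2 * (Real.exp ξ - 1)) * t) ≠ 0 := hN.ne'
  have hA0 : (sig1 - lam2 * (Real.exp ξ - 1)
      * Real.exp (-(sig1 - lam2 * (Real.exp ξ - 1)) * t))
      / (sig1 - lam2 * (Real.exp ξ - 1)) ≠ 0 := (div_pos hN hs).ne'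
  have hzd : HasDerivAt (fun x : ℝ => lam2 * (Real.exp x - 1)) (lam2 * Real.exp ξ) ξ :=
    ((Real.hasDerivAt_exp ξ).sub_const 1).const_mul lam2
  have hsd : HasDerivAt (fun x : ℝ => sig1 - lam2 * (Real.exp x - 1))
      (-(lam2 * Real.exp ξ)) ξ := hzd.const_sub sig1
  have hstd : HasDerivAt (fun x : ℝ => -(sig1 - lam2 * (Real.exp x - 1)) * t)
      (lam2 * Real.exp ξ * t) ξ := by
    simpa using hsd.neg.mul_const t
  have hEd : HasDerivAt (fun x : ℝ => Real.exp (-(sig1 - lam2 * (Real.exp x - 1)) * t))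
      (Real.exp (-(sig1 - lam2 * (Real.exp ξ - 1)) * t) * (lam2 * Real.exp ξ * t)) ξ :=
    hstd.exp
  have hNd := (hzd.mul hEd).const_sub sig1
  have hLd' : HasDerivAt (fun x : ℝ => Real.log ((sig1 - lam2 * (Real.exp x - 1)
        * Real.exp (-(sig1 - lam2 * (Real.exp x - 1)) * t))
      / (sig1 - lam2 * (Real.exp x - 1))))
      (lam2 * Real.exp ξ / (sig1 - lam2 * (Real.exp ξ - 1))
        - lam2 * Real.exp ξ * Real.exp (-(sig1 - lam2 * (Real.exp ξ - 1)) * t)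
            * (1 + lam2 * (Real.exp ξ - 1) * t)
          / (sig1 - lam2 * (Real.exp ξ - 1)
              * Real.exp (-(sig1 - lam2 * (Real.exp ξ - 1)) * t))) ξ := by
    have h := ((hNd.div hsd hs0).log hA0)
    refine h.congr_deriv ?_
    simp only [Pi.mul_apply, Pi.div_apply]
    have hN0' := hN0
    have hs0' := hs0
    revert hN0' hs0'
    generalize Real.exp (-(sig1 - lam2 * (Real.exp ξ - 1)) * t) = E
    generalize Real.exp ξ = a
    intro hN0' hs0'
    rw [div_sub_div _ _ hs0' hN0', div_div_eq_mul_div, div_mul_eq_mul_div, div_div, div_eq_div_iff (by positivity) (mul_ne_zero hs0' hN0')]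
    ring
  have hrd' : HasDerivAt (fun x : ℝ => lam2 * (Real.exp x - 1)
        / (sig1 - lam2 * (Real.exp x - 1)))
      (lam2 * Real.exp ξ * sig1 / (sig1 - lam2 * (Real.exp ξ - 1)) ^ 2) ξ := by
    have h := hzd.div hsd hs0
    refine h.congr_deriv ?_
    have hN0' := hN0
    have hs0' := hs0
    revert hN0' hs0'
    generalize Real.exp (-(sig1 - lam2 * (Real.exp ξ - 1)) * t) = E
    generalize Real.exp ξ = a
    intro hN0' hs0'
    field_simp
    ring
  have hwd' : HasDerivAt (fun x : ℝ => t - (1 - Real.exp (-(sig1 - lam2 * (Real.exp x - 1)) * t))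
        / (sig1 - lam2 * (Real.exp x - 1)))
      (lam2 * Real.exp ξ * (Real.exp (-(sig1 - lam2 * (Real.exp ξ - 1)) * t) * t
            * (sig1 - lam2 * (Real.exp ξ - 1))
          - (1 - Real.exp (-(sig1 - lam2 * (Real.exp ξ - 1)) * t)))
        / (sig1 - lam2 * (Real.exp ξ - 1)) ^ 2) ξ := by
    have h := ((hEd.const_sub 1).div hsd hs0).const_sub t
    refine h.congr_deriv ?_
    have hN0' := hN0
    have hs0' := hs0
    revert hN0' hs0'
    generalize Real.exp (-(sig1 - lam2 * (Real.exp ξ - 1)) * t) = E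
    generalize Real.exp ξ = a
    intro hN0' hs0'
    field_simp
    ring
  exact ((hasDerivAt_id ξ).mul_const Ptau).add ((hLd'.const_mul Mtau).add
    ((hrd'.const_mul (2 * lam1)).mul hwd'))

set_option maxHeartbeats 2000000 in
private lemma aux_deriv7' (sig1 lam1 lam2 t Mtau Ptau : ℝ)
    (hsig1 : 0 < sig1) (ht : 0 ≤ t) :
    HasDerivAt (fun x : ℝ => 1 * Ptau
      + (Mtau * (lam2 * Real.exp x / (sig1 - lam2 * (Real.exp x - 1))
          - lam2 * Real.exp x * Real.exp (-(sig1 - lam2 * (Real.exp x - 1)) * t)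
              * (1 + lam2 * (Real.exp x - 1) * t)
            / (sig1 - lam2 * (Real.exp x - 1)
                * Real.exp (-(sig1 - lam2 * (Real.exp x - 1)) * t)))
        + (2 * lam1 * (lam2 * Real.exp x * sig1 / (sig1 - lam2 * (Real.exp x - 1)) ^ 2)
            * (t - (1 - Real.exp (-(sig1 - lam2 * (Real.exp x - 1)) * t))
              / (sig1 - lam2 * (Real.exp x - 1)))
          + 2 * lam1 * (lam2 * (Real.exp x - 1) / (sig1 - lam2 * (Real.exp x - 1)))
            * (lam2 * Real.exp x * (Real.exp (-(sig1 - lam2 * (Real.exp x - 1)) * t) * t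
                  * (sig1 - lam2 * (Real.exp x - 1))
                - (1 - Real.exp (-(sig1 - lam2 * (Real.exp x - 1)) * t)))
              / (sig1 - lam2 * (Real.exp x - 1)) ^ 2))))
      (Mtau * (lam2 / sig1) * (1 - Real.exp (-sig1 * t)
          + lam2 / sig1 * (1 - Real.exp (-sig1 * t)
            * (Real.exp (-sig1 * t) + 2 * t * sig1)))
        + 2 * (lam1 * lam2 / sig1 ^ 2) * (t * sig1 - 1 + Real.exp (-sig1 * t)
          + 2 * (lam2 / sig1) * (sig1 * t * (1 + Real.exp (-sig1 * t))
            - 2 * (1 - Real.exp (-sig1 * t))))) 0 := by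
  have hz : lam2 * (Real.exp 0 - 1) < sig1 := by simpa using hsig1
  have hseq : sig1 - lam2 * (Real.exp 0 - 1) = sig1 := by simp
  have hs0 : sig1 - lam2 * (Real.exp 0 - 1) ≠ 0 := by rw [hseq]; exact hsig1.ne'
  have hN : 0 < sig1 - lam2 * (Real.exp 0 - 1)
      * Real.exp (-(sig1 - lam2 * (Real.exp 0 - 1)) * t) :=
    aux_pos7 sig1 t _ hsig1 ht hz
  have hN0 : sig1 - lam2 * (Real.exp 0 - 1)
      * Real.exp (-(sig1 - lam2 * (Real.exp 0 - 1)) * t) ≠ 0 := hN.ne'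
  have hs20 : (sig1 - lam2 * (Real.exp 0 - 1)) ^ 2 ≠ 0 := pow_ne_zero 2 hs0
  have hzd : HasDerivAt (fun x : ℝ => lam2 * (Real.exp x - 1)) (lam2 * Real.exp 0) 0 :=
    ((Real.hasDerivAt_exp 0).sub_const 1).const_mul lam2
  have hcd : HasDerivAt (fun x : ℝ => lam2 * Real.exp x) (lam2 * Real.exp 0) 0 :=
    (Real.hasDerivAt_exp 0).const_mul lam2
  have hsd : HasDerivAt (fun x : ℝ => sig1 - lam2 * (Real.exp x - 1))
      (-(lam2 * Real.exp 0)) 0 := hzd.const_sub sig1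
  have hstd : HasDerivAt (fun x : ℝ => -(sig1 - lam2 * (Real.exp x - 1)) * t)
      (lam2 * Real.exp 0 * t) 0 := by
    simpa using hsd.neg.mul_const t
  have hEd : HasDerivAt (fun x : ℝ => Real.exp (-(sig1 - lam2 * (Real.exp x - 1)) * t))
      (Real.exp (-(sig1 - lam2 * (Real.exp 0 - 1)) * t) * (lam2 * Real.exp 0 * t)) 0 :=
    hstd.exp
  have hNd := (hzd.mul hEd).const_sub sig1
  have hT := (hcd.div hsd hs0).sub
    ((((hcd.mul hEd).mul ((hzd.mul_const t).const_add 1)).div hNd hN0))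
  have hs2 := hsd.pow 2
  have hw := ((hEd.const_sub 1).div hsd hs0).const_sub t
  have hU := (((hcd.mul_const sig1).div hs2 hs20).const_mul (2 * lam1)).mul hw
  have hV := (((hzd.div hsd hs0)).const_mul (2 * lam1)).mul
    ((hcd.mul (((hEd.mul_const t).mul hsd).sub (hEd.const_sub 1))).div hs2 hs20)
  have total := (hasDerivAt_const (0:ℝ) (1 * Ptau)).add
    ((hT.const_mul Mtau).add (hU.add hV))
  refine total.congr_deriv ?_
  norm_num
  have h1 := hsig1.ne'
  generalize Real.exp (-(sig1 * t)) = K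
  field_simp
  ring


private noncomputable def g7 (sig1 lam1 lam2 t Mtau Ptau x : ℝ) : ℝ :=
  x * Ptau
    + (Mtau * Real.log ((sig1 - lam2 * (Real.exp x - 1)
          * Real.exp (-(sig1 - lam2 * (Real.exp x - 1)) * t))
        / (sig1 - lam2 * (Real.exp x - 1)))
      + 2 * lam1 * (lam2 * (Real.exp x - 1) / (sig1 - lam2 * (Real.exp x - 1)))
        * (t - (1 - Real.exp (-(sig1 - lam2 * (Real.exp x - 1)) * t))
          / (sig1 - lam2 * (Real.exp x - 1))))

private noncomputable def gd7 (sig1 lam1 lam2 t Mtau Ptau x : ℝ) : ℝ :=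
  1 * Ptau + (Mtau * (lam2 * Real.exp x / (sig1 - lam2 * (Real.exp x - 1))
      - lam2 * Real.exp x * Real.exp (-(sig1 - lam2 * (Real.exp x - 1)) * t)
          * (1 + lam2 * (Real.exp x - 1) * t)
        / (sig1 - lam2 * (Real.exp x - 1)
            * Real.exp (-(sig1 - lam2 * (Real.exp x - 1)) * t)))
    + (2 * lam1 * (lam2 * Real.exp x * sig1 / (sig1 - lam2 * (Real.exp x - 1)) ^ 2)
        * (t - (1 - Real.exp (-(sig1 - lam2 * (Real.exp x - 1)) * t))
          / (sig1 - lam2 * (Real.exp x - 1)))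
      + 2 * lam1 * (lam2 * (Real.exp x - 1) / (sig1 - lam2 * (Real.exp x - 1)))
        * (lam2 * Real.exp x * (Real.exp (-(sig1 - lam2 * (Real.exp x - 1)) * t) * t
              * (sig1 - lam2 * (Real.exp x - 1))
            - (1 - Real.exp (-(sig1 - lam2 * (Real.exp x - 1)) * t)))
          / (sig1 - lam2 * (Real.exp x - 1)) ^ 2)))

private lemma aux_d1 (sig1 lam1 lam2 t Mtau Ptau : ℝ)
    (hsig1 : 0 < sig1) (ht : 0 ≤ t) (ξ : ℝ)
    (hz : lam2 * (Real.exp ξ - 1) < sig1) :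
    HasDerivAt (fun x => g7 sig1 lam1 lam2 t Mtau Ptau x)
      (gd7 sig1 lam1 lam2 t Mtau Ptau ξ) ξ := by
  unfold g7 gd7
  exact aux_deriv7 sig1 lam1 lam2 t Mtau Ptau hsig1 ht ξ hz

private lemma aux_d2 (sig1 lam1 lam2 t Mtau Ptau : ℝ)
    (hsig1 : 0 < sig1) (ht : 0 ≤ t) :
    HasDerivAt (fun x => gd7 sig1 lam1 lam2 t Mtau Ptau x)
      (Mtau * (lam2 / sig1) * (1 - Real.exp (-sig1 * t)
          + lam2 / sig1 * (1 - Real.exp (-sig1 * t)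
            * (Real.exp (-sig1 * t) + 2 * t * sig1)))
        + 2 * (lam1 * lam2 / sig1 ^ 2) * (t * sig1 - 1 + Real.exp (-sig1 * t)
          + 2 * (lam2 / sig1) * (sig1 * t * (1 + Real.exp (-sig1 * t))
            - 2 * (1 - Real.exp (-sig1 * t))))) 0 := by
  unfold gd7
  exact aux_deriv7' sig1 lam1 lam2 t Mtau Ptau hsig1 ht

set_option maxHeartbeats 2000000 in
/-- The conditional moment generating function
`F₂ ξ = e^{ξ P_τ} · h₂(λ₂(e^ξ − 1))` of the protein number a time `t` after gene
replication (where transcription occurs at the doubled rate `2λ₁`) is twice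
differentiable at `0`, with first derivative
`F₂'(0) = P_τ + λ₂(2(λ₁/σ₁)t + (M_τ − 2λ₁/σ₁)(1 − e^{−σ₁ t})/σ₁)` and second derivative
`F₂''(0) = F₂'(0)² + M_τ (λ₂/σ₁)(1 − e^{−σ₁ t} + (λ₂/σ₁)(1 − e^{−σ₁ t}(e^{−σ₁ t} + 2tσ₁)))
  + 2(λ₁λ₂/σ₁²)(tσ₁ − 1 + e^{−σ₁ t} + 2(λ₂/σ₁)(σ₁ t (1 + e^{−σ₁ t}) − 2(1 − e^{−σ₁ t})))`. -/
theorem mgf_protein_after_replication_two_derivs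
    (sig1 lam1 lam2 t Mtau Ptau : ℝ)
    (hsig1 : 0 < sig1) (hlam1 : 0 ≤ lam1) (hlam2 : 0 ≤ lam2) (ht : 0 ≤ t) (hMtau : 0 ≤ Mtau)
    (h2 F2 : ℝ → ℝ)
    (hh2 : ∀ ζ : ℝ, ζ < sig1 →
        0 < (sig1 - ζ * Real.exp (-(sig1 - ζ) * t)) / (sig1 - ζ) →
      h2 ζ = Real.exp (Mtau * Real.log ((sig1 - ζ * Real.exp (-(sig1 - ζ) * t)) / (sig1 - ζ))
        + 2 * lam1 * (ζ / (sig1 - ζ))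
          * (t - (1 - Real.exp (-(sig1 - ζ) * t)) / (sig1 - ζ))))
    (hF2 : ∀ ξ : ℝ, F2 ξ = Real.exp (ξ * Ptau) * h2 (lam2 * (Real.exp ξ - 1))) :
    HasDerivAt F2
      (Ptau + lam2 * (2 * (lam1 / sig1) * t
        + (Mtau - 2 * lam1 / sig1) * (1 - Real.exp (-sig1 * t)) / sig1)) 0 ∧
    HasDerivAt (deriv F2)
      ((Ptau + lam2 * (2 * (lam1 / sig1) * t
          + (Mtau - 2 * lam1 / sig1) * (1 - Real.exp (-sig1 * t)) / sig1)) ^ 2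
        + Mtau * (lam2 / sig1) * (1 - Real.exp (-sig1 * t)
          + lam2 / sig1 * (1 - Real.exp (-sig1 * t)
            * (Real.exp (-sig1 * t) + 2 * t * sig1)))
        + 2 * (lam1 * lam2 / sig1 ^ 2) * (t * sig1 - 1 + Real.exp (-sig1 * t)
          + 2 * (lam2 / sig1) * (sig1 * t * (1 + Real.exp (-sig1 * t))
            - 2 * (1 - Real.exp (-sig1 * t))))) 0 := by
  have hUopen : IsOpen {ξ : ℝ | lam2 * (Real.exp ξ - 1) < sig1} :=
    isOpen_lt (by fun_prop) continuous_const
  have hU0 : (0:ℝ) ∈ {ξ : ℝ | lam2 * (Real.exp ξ - 1) < sig1} := by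
    simpa using hsig1
  have hUnhds : {ξ : ℝ | lam2 * (Real.exp ξ - 1) < sig1} ∈ nhds (0:ℝ) :=
    hUopen.mem_nhds hU0
  have hFeq : ∀ ξ ∈ {ξ : ℝ | lam2 * (Real.exp ξ - 1) < sig1},
      F2 ξ = Real.exp (g7 sig1 lam1 lam2 t Mtau Ptau ξ) := by
    intro ξ hξ
    have hξ' : lam2 * (Real.exp ξ - 1) < sig1 := hξ
    have hpos : 0 < (sig1 - lam2 * (Real.exp ξ - 1)
        * Real.exp (-(sig1 - lam2 * (Real.exp ξ - 1)) * t))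
        / (sig1 - lam2 * (Real.exp ξ - 1)) :=
      div_pos (aux_pos7 sig1 t _ hsig1 ht hξ') (by linarith)
    rw [hF2 ξ, hh2 _ hξ' hpos, ← Real.exp_add, g7]
  have hFd : ∀ ξ ∈ {ξ : ℝ | lam2 * (Real.exp ξ - 1) < sig1},
      HasDerivAt F2
        (Real.exp (g7 sig1 lam1 lam2 t Mtau Ptau ξ)
          * gd7 sig1 lam1 lam2 t Mtau Ptau ξ) ξ := by
    intro ξ hξ
    have hξ' : lam2 * (Real.exp ξ - 1) < sig1 := hξ
    have hexp := (aux_d1 sig1 lam1 lam2 t Mtau Ptau hsig1 ht ξ hξ').exp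
    refine hexp.congr_of_eventuallyEq ?_
    filter_upwards [hUopen.mem_nhds hξ] with x hx
    exact hFeq x hx
  constructor
  · have h := hFd 0 hU0
    convert h using 1
    unfold g7 gd7
    norm_num [div_self hsig1.ne']
    have h1 := hsig1.ne'
    generalize Real.exp (-(sig1 * t)) = K
    field_simp
    ring
  · have hderiv_eq : deriv F2 =ᶠ[nhds (0:ℝ)] fun ξ : ℝ =>
        Real.exp (g7 sig1 lam1 lam2 t Mtau Ptau ξ)
          * gd7 sig1 lam1 lam2 t Mtau Ptau ξ := by
      filter_upwards [hUnhds] with x hx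
      exact (hFd x hx).deriv
    have hz0 : lam2 * (Real.exp 0 - 1) < sig1 := by simpa using hsig1
    have hprod := ((aux_d1 sig1 lam1 lam2 t Mtau Ptau hsig1 ht 0 hz0).exp).mul
      (aux_d2 sig1 lam1 lam2 t Mtau Ptau hsig1 ht)
    have h := hprod.congr_of_eventuallyEq hderiv_eq
    refine h.congr_deriv ?_
    unfold g7 gd7
    norm_num [div_self hsig1.ne']
    have h1 := hsig1.ne'
    generalize Real.exp (-(sig1 * t)) = K
    field_simp
    ring
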